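/- arXiv:1204.0095 — 3 statements merged into one kernel-verified Lean document; each statement's English description precedes it below -/
import Mathlib

section
/- A finitely generated periodic subgroup G ⊆ GL(k,ℂ) is finite. -/
instance SchurAux.isJacobsonRing_int : IsJacobsonRing ℤ := by
  refine isJacobsonRing_iff_prime_eq.mpr fun P hP => ?_
  by_cases hbot : P = ⊥
  · subst hbot
    refine le_antisymm (fun x hx => ?_) Ideal.le_jacobson
    have hu := Ideal.mem_jacobson_bot.mp hx x
    rcases Int.isUnit_iff.mp hu with h | h
    · have : x = 0 := by nlinarith
      simp [this]
    · have : x = 0 := by nlinarith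
      simp [this]
  · haveI : P.IsMaximal := IsPrime.to_maximal_ideal hbot
    exact Ideal.jacobson_eq_self_of_isMaximal

/-- A field which is a finitely generated `ℤ`-algebra is finite. -/
lemma SchurAux.finite_of_field_finiteType (S : Type*) [Field S] [Algebra.FiniteType ℤ S] :
    Finite S := by
  have hfin : Module.Finite ℤ S := finite_of_finite_type_of_isJacobsonRing ℤ S
  obtain ⟨r, hr⟩ := CharP.exists S
  rcases CharP.char_is_prime_or_zero S r with hprime | hzero
  · refine Module.finite_of_fg_torsion S ?_
    intro x
    refine ⟨⟨(r : ℤ), mem_nonZeroDivisors_of_ne_zero (by exact_mod_cast hprime.ne_zero)⟩, ?_⟩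
    have : ((r : ℤ) : S) = 0 := by exact_mod_cast CharP.cast_eq_zero S r
    simp [zsmul_eq_mul, this]
  · subst hzero
    haveI : CharZero S := CharP.charP_to_charZero S
    haveI : IsNoetherian ℤ S := isNoetherian_of_isNoetherianRing_of_finite ℤ S
    let f : ℚ →ₗ[ℤ] S := (algebraMap ℚ S).toAddMonoidHom.toIntLinearMap
    have hinj : Function.Injective f := (algebraMap ℚ S).injective
    haveI : IsNoetherian ℤ ℚ := isNoetherian_of_injective f hinj
    haveI : Module.Finite ℤ ℚ := ⟨IsNoetherian.noetherian ⊤⟩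
    haveI : Algebra.IsIntegral ℤ ℚ := Algebra.IsIntegral.of_finite ℤ ℚ
    obtain ⟨z, hz⟩ := IsIntegrallyClosed.isIntegral_iff.mp
      (Algebra.IsIntegral.isIntegral (R := ℤ) ((2 : ℚ)⁻¹))
    exfalso
    have h2 : ((2 * z : ℤ) : ℚ) = 1 := by
      push_cast
      have : (algebraMap ℤ ℚ) z = (z : ℚ) := by simp
      rw [this] at hz
      rw [hz]
      norm_num
    have : (2 * z : ℤ) = 1 := by exact_mod_cast h2
    omega

/-- A field which is a finitely generated `ℤ`-algebra is finite, with prime characteristic. -/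
lemma SchurAux.exists_char (F : Type*) [Field F] [Algebra.FiniteType ℤ F] :
    ∃ q : ℕ, q.Prime ∧ CharP F q ∧ Finite F := by
  have hFin : Finite F := SchurAux.finite_of_field_finiteType F
  obtain ⟨q, hq⟩ := CharP.exists F
  exact ⟨q, CharP.char_prime_of_ne_zero F (CharP.char_ne_zero_of_finite F q), hq, hFin⟩

/-- Every finitely generated subalgebra of `ℂ` admits a homomorphism onto a finite field. -/
lemma SchurAux.exists_finite_residue (R : Subalgebra ℤ ℂ) (hfg : R.FG) :
    ∃ (F : Type) (_ : Field F) (_ : Finite F) (q : ℕ) (_ : ↥R →+* F), q.Prime ∧ CharP F q := by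
  haveI : Nontrivial ↥R := ⟨⟨0, 1, fun h => by
    have := congrArg Subtype.val h
    simp at this⟩⟩
  haveI : Algebra.FiniteType ℤ ↥R := (Subalgebra.fg_iff_finiteType _).mp hfg
  obtain ⟨m, hm⟩ := Ideal.exists_maximal ↥R
  haveI := hm
  letI : Field (↥R ⧸ m) := Ideal.Quotient.field m
  haveI : Algebra.FiniteType ℤ (↥R ⧸ m) :=
    Algebra.FiniteType.of_surjective
      (Ideal.Quotient.mkₐ ℤ m) (Ideal.Quotient.mkₐ_surjective ℤ m)
  obtain ⟨q, hqprime, hq, hFin⟩ := @SchurAux.exists_char (↥R ⧸ m) _ ‹_›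
  exact ⟨↥R ⧸ m, ‹_›, hFin, q, Ideal.Quotient.mk m, hqprime, hq⟩


open Matrix in
/-- If a matrix `A` over a ring `R` (injecting into `ℂ`) satisfies `A ^ p = 1` over `ℂ`,
and `A` maps to `1` under a ring hom `π : R →+* F` with `(p : F) ≠ 0`, then `A = 1` over `ℂ`. -/
lemma SchurAux.eq_one_of_pow_eq_one {k : ℕ} {R F : Type*} [CommRing R] [Field F]
    (ι : R →+* ℂ) (hι : Function.Injective ι) (π : R →+* F)
    {p : ℕ} (hp : (p : F) ≠ 0) (A : Matrix (Fin k) (Fin k) R)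
    (hpow : ι.mapMatrix A ^ p = 1) (himg : π.mapMatrix A = 1) :
    ι.mapMatrix A = 1 := by
  set B : Matrix (Fin k) (Fin k) R := ∑ i ∈ Finset.range p, A ^ i with hB
  have hπB : π.mapMatrix B = (p : F) • (1 : Matrix (Fin k) (Fin k) F) := by
    rw [hB, map_sum]
    simp only [map_pow, himg, one_pow]
    simp [Finset.sum_const, Nat.cast_smul_eq_nsmul F]
  have hdetF : π B.det ≠ 0 := by
    rw [RingHom.map_det, hπB]
    rw [Matrix.det_smul, Matrix.det_one, mul_one]
    simpa using pow_ne_zero _ hp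
  have hdetR : B.det ≠ 0 := fun h => hdetF (by rw [h, map_zero])
  have hdetC : (ι.mapMatrix B).det ≠ 0 := by
    rw [← RingHom.map_det]
    exact fun h => hdetR (hι (by rw [h, map_zero]))
  have hunit : IsUnit (ι.mapMatrix B) :=
    (Matrix.isUnit_iff_isUnit_det _).mpr (isUnit_iff_ne_zero.mpr hdetC)
  have hgeom : ι.mapMatrix B * (ι.mapMatrix A - 1) = 0 := by
    have := geom_sum_mul (ι.mapMatrix A) p
    rw [hB, map_sum]
    simp only [map_pow]
    rw [this, hpow, sub_self]
  obtain ⟨u, hu⟩ := hunit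
  have : ι.mapMatrix A - 1 = 0 := by
    have h2 := congrArg (fun M => (↑u⁻¹ : Matrix (Fin k) (Fin k) ℂ) * M) hgeom
    simp only [← hu, ← mul_assoc, Units.inv_mul, one_mul, mul_zero] at h2
    exact h2
  exact sub_eq_zero.mp this

/-- **Schur (1911).** A finitely generated periodic subgroup `G ⊆ GL(k,ℂ)` is finite. -/
theorem schur_linear_group_finite_of_fg_periodic (k : ℕ)
    (G : Subgroup (Matrix.GeneralLinearGroup (Fin k) ℂ))
    (hfg : G.FG) (hper : ∀ g ∈ G, ∃ n, 1 ≤ n ∧ g ^ n = 1) :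
    Finite G := by
  classical
  obtain ⟨S, hS⟩ := hfg
  -- the set of matrix entries of the generators
  have hE : (⋃ s ∈ (S : Set (Matrix.GeneralLinearGroup (Fin k) ℂ)),
      Set.range (fun ij : Fin k × Fin k =>
        (↑s : Matrix (Fin k) (Fin k) ℂ) ij.1 ij.2)).Finite :=
    Set.Finite.biUnion S.finite_toSet (fun s _ => Set.finite_range _)
  obtain ⟨R₀, hR₀fg, hER₀⟩ : ∃ R₀ : Subalgebra ℤ ℂ, R₀.FG ∧
      ∀ s ∈ S, ∀ i j, (↑s : Matrix (Fin k) (Fin k) ℂ) i j ∈ R₀ := by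
    refine ⟨Algebra.adjoin ℤ _, Subalgebra.fg_def.mpr ⟨_, hE, rfl⟩, fun s hs i j => ?_⟩
    exact Algebra.subset_adjoin (Set.mem_biUnion hs ⟨(i, j), rfl⟩)
  -- all entries of all elements of G lie in R₀
  have hmul : ∀ x y : Matrix.GeneralLinearGroup (Fin k) ℂ,
      (∀ i j, (↑x : Matrix (Fin k) (Fin k) ℂ) i j ∈ R₀) →
      (∀ i j, (↑y : Matrix (Fin k) (Fin k) ℂ) i j ∈ R₀) →
      (∀ i j, (↑(x * y) : Matrix (Fin k) (Fin k) ℂ) i j ∈ R₀) := by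
    intro x y hx hy i j
    rw [Units.val_mul, Matrix.mul_apply]
    exact Subalgebra.sum_mem _ fun l _ => mul_mem (hx i l) (hy l j)
  have hone : ∀ i j, (↑(1 : Matrix.GeneralLinearGroup (Fin k) ℂ)
      : Matrix (Fin k) (Fin k) ℂ) i j ∈ R₀ := by
    intro i j
    rw [Units.val_one, Matrix.one_apply]
    split
    · exact one_mem _
    · exact zero_mem _
  have hpowmem : ∀ (x : Matrix.GeneralLinearGroup (Fin k) ℂ),
      (∀ i j, (↑x : Matrix (Fin k) (Fin k) ℂ) i j ∈ R₀) → ∀ n : ℕ,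
      (∀ i j, (↑(x ^ n) : Matrix (Fin k) (Fin k) ℂ) i j ∈ R₀) := by
    intro x hx n
    induction n with
    | zero => simpa using hone
    | succ n IH => rw [pow_succ]; exact hmul _ _ IH hx
  have key : ∀ g ∈ G, ∀ i j, (↑g : Matrix (Fin k) (Fin k) ℂ) i j ∈ R₀ := by
    intro g hg
    rw [← hS] at hg
    induction hg using Subgroup.closure_induction with
    | mem s hs => exact hER₀ s hs
    | one => exact hone
    | mul x y hx hy ihx ihy => exact hmul x y ihx ihy
    | inv x hx ih =>
        have hxG : x ∈ G := by rw [← hS]; exact hx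
        obtain ⟨n, hn1, hnx⟩ := hper x hxG
        have hinv : x⁻¹ = x ^ (n - 1) := by
          apply inv_eq_of_mul_eq_one_right
          rw [← pow_succ']
          have : n - 1 + 1 = n := by omega
          rw [this]
          exact hnx
        rw [hinv]
        exact hpowmem x ih (n - 1)
  -- two finite residue fields with distinct characteristics
  obtain ⟨F₁, hField₁, hFin₁, q₁, π₁', hq₁prime, hq₁char⟩ :=
    SchurAux.exists_finite_residue R₀ hR₀fg
  obtain ⟨R₁, hR₁fg, hR₀R₁, hqinv⟩ : ∃ R₁ : Subalgebra ℤ ℂ,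
      R₁.FG ∧ R₀ ≤ R₁ ∧ ((q₁ : ℂ))⁻¹ ∈ R₁ := by
    obtain ⟨t, ht⟩ := hR₀fg
    refine ⟨Algebra.adjoin ℤ (↑t ∪ {((q₁ : ℂ))⁻¹}),
      Subalgebra.fg_def.mpr ⟨_, t.finite_toSet.union (Set.finite_singleton _), rfl⟩, ?_, ?_⟩
    · rw [← ht]; exact Algebra.adjoin_mono Set.subset_union_left
    · exact Algebra.subset_adjoin (Set.mem_union_right _ rfl)
  obtain ⟨F₂, hField₂, hFin₂, q₂, ρ₂, hq₂prime, hq₂char⟩ :=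
    SchurAux.exists_finite_residue R₁ hR₁fg
  -- the two characteristics differ
  have hq12 : q₁ ≠ q₂ := by
    intro h
    have hq₁C : ((q₁ : ℂ)) ≠ 0 := Nat.cast_ne_zero.mpr hq₁prime.ne_zero
    have hqmem : ((q₁ : ℂ)) ∈ R₁ := by
      exact_mod_cast Subalgebra.natCast_mem R₁ q₁
    have hprod : (⟨_, hqmem⟩ : ↥R₁) * ⟨_, hqinv⟩ = 1 := by
      apply Subtype.ext
      simp [mul_inv_cancel₀ hq₁C]
    have h1 : ρ₂ ⟨_, hqmem⟩ * ρ₂ ⟨_, hqinv⟩ = 1 := by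
      rw [← map_mul, hprod, map_one]
    have hcast : ρ₂ ⟨_, hqmem⟩ = (q₁ : F₂) := by
      have : (⟨_, hqmem⟩ : ↥R₁) = (q₁ : ↥R₁) := by
        apply Subtype.ext; push_cast; rfl
      rw [this, map_natCast]
    rw [hcast] at h1
    have hz : (q₁ : F₂) = 0 := by rw [h]; exact CharP.cast_eq_zero F₂ q₂
    rw [hz, zero_mul] at h1
    exact zero_ne_one h1
  -- the entrywise reduction monoid homomorphism into matrices over R₀
  let e : ↥G →* Matrix (Fin k) (Fin k) ↥R₀ :=
  { toFun := fun g => Matrix.of fun i j =>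
      (⟨g.1.1 i j, key g.1 g.2 i j⟩ : ↥R₀)
    map_one' := by
      ext i j
      simp [Matrix.one_apply, apply_ite Subtype.val]
    map_mul' := fun g h => by
      ext i j
      simp [Matrix.mul_apply] }
  have he : ∀ g : ↥G, (R₀.val.toRingHom).mapMatrix (e g)
      = (g.1.1 : Matrix (Fin k) (Fin k) ℂ) := fun g => by
    ext i j; rfl
  let π₁ : ↥R₀ →+* F₁ := π₁'
  let π₂ : ↥R₀ →+* F₂ := ρ₂.comp (Subalgebra.inclusion hR₀R₁).toRingHom
  let φ₁ : ↥G →* Matrix (Fin k) (Fin k) F₁ := (π₁.mapMatrix).toMonoidHom.comp e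
  let φ₂ : ↥G →* Matrix (Fin k) (Fin k) F₂ := (π₂.mapMatrix).toMonoidHom.comp e
  -- triviality of the joint kernel
  have hker : ∀ c : ↥G, φ₁ c = 1 → φ₂ c = 1 → c = 1 := by
    intro c h1 h2
    obtain ⟨n, hn1, hnpow⟩ := hper ↑c c.2
    have hcn : c ^ n = 1 := by
      apply Subtype.ext
      rw [SubmonoidClass.coe_pow]
      simpa using hnpow
    clear hnpow
    induction n using Nat.strong_induction_on with
    | _ n IH =>
      by_cases hn : n = 1
      · rw [hn, pow_one] at hcn; exact hcn
      · have hn1' : 1 ≤ n := hn1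
        set p := n.minFac with hpdef
        have hp : p.Prime := Nat.minFac_prime hn
        set m := n / p with hmdef
        have hmp : m * p = n := Nat.div_mul_cancel n.minFac_dvd
        have hm1 : 1 ≤ m := Nat.div_pos (Nat.minFac_le (by omega)) hp.pos
        have hmlt : m < n := Nat.div_lt_self (by omega) hp.one_lt
        have hcmp : (c ^ m) ^ p = 1 := by rw [← pow_mul, hmp]; exact hcn
        have hpow' : (R₀.val.toRingHom).mapMatrix (e (c ^ m)) ^ p = 1 := by
          rw [he]
          rw [← Units.val_pow_eq_pow_val, ← Subgroup.coe_pow, hcmp]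
          simp
        have hιinj : Function.Injective (R₀.val.toRingHom) := Subtype.val_injective
        have hcm : c ^ m = 1 := by
          rcases eq_or_ne p q₁ with hpq | hpq
          · -- p = q₁ , hence p ≠ q₂ ; use the second reduction
            have hp2 : (p : F₂) ≠ 0 := by
              intro h0
              have hdvd := (CharP.cast_eq_zero_iff F₂ q₂ p).mp h0
              have : q₂ = p := (Nat.prime_dvd_prime_iff_eq hq₂prime hp).mp hdvd
              exact hq12 (by omega)
            have himg : π₂.mapMatrix (e (c ^ m)) = 1 := by
              have : φ₂ (c ^ m) = 1 := by rw [map_pow, h2, one_pow]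
              exact this
            have hfin := SchurAux.eq_one_of_pow_eq_one (R₀.val.toRingHom) hιinj π₂ hp2
              (e (c ^ m)) hpow' himg
            rw [he] at hfin
            apply Subtype.ext
            rw [SubmonoidClass.coe_pow]
            exact Units.ext hfin
          · -- p ≠ q₁ ; use the first reduction
            have hp1 : (p : F₁) ≠ 0 := by
              intro h0
              have hdvd := (CharP.cast_eq_zero_iff F₁ q₁ p).mp h0
              exact hpq ((Nat.prime_dvd_prime_iff_eq hq₁prime hp).mp hdvd).symm
            have himg : π₁.mapMatrix (e (c ^ m)) = 1 := by
              have : φ₁ (c ^ m) = 1 := by rw [map_pow, h1, one_pow]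
              exact this
            have hfin := SchurAux.eq_one_of_pow_eq_one (R₀.val.toRingHom) hιinj π₁ hp1
              (e (c ^ m)) hpow' himg
            rw [he] at hfin
            apply Subtype.ext
            rw [SubmonoidClass.coe_pow]
            exact Units.ext hfin
        exact IH m hmlt hm1 hcm
  -- the joint reduction map is injective
  have hinj : Function.Injective (fun g : ↥G => (φ₁ g, φ₂ g)) := by
    intro g h hgh
    simp only [Prod.mk.injEq] at hgh
    have e1 : φ₁ (g⁻¹ * h) = 1 := by
      rw [map_mul, ← hgh.1, ← map_mul, inv_mul_cancel, map_one]
    have e2 : φ₂ (g⁻¹ * h) = 1 := by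
      rw [map_mul, ← hgh.2, ← map_mul, inv_mul_cancel, map_one]
    exact inv_mul_eq_one.mp (hker _ e1 e2)
  exact Finite.of_injective _ hinj
end

section
/- A subgroup G of germs at 0 of holomorphic diffeomorphisms of ℂᵏ of finite exponent is finite. -/
open Filter MeasureTheory Set Function

/-- The germ at `0 ∈ ℂᵏ` of a map `ℂᵏ → ℂᵏ`. -/
noncomputable def germ0 (k : ℕ) (f : (Fin k → ℂ) → (Fin k → ℂ)) :
    Filter.Germ (nhds (0 : Fin k → ℂ)) (Fin k → ℂ) :=
  Filter.Germ.ofFun f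

/-- `g` is the germ at `0` of a holomorphic diffeomorphism of `(ℂᵏ, 0)`,
i.e. of a biholomorphism between neighborhoods of `0` fixing `0`. -/
def IsHolDiffGerm (k : ℕ) (g : Filter.Germ (nhds (0 : Fin k → ℂ)) (Fin k → ℂ)) : Prop :=
  ∃ f finv : (Fin k → ℂ) → (Fin k → ℂ),
    g = germ0 k f ∧ AnalyticAt ℂ f 0 ∧ f 0 = 0 ∧ AnalyticAt ℂ finv 0 ∧ finv 0 = 0 ∧
    (∀ᶠ x in nhds (0 : Fin k → ℂ), finv (f x) = x) ∧
    (∀ᶠ x in nhds (0 : Fin k → ℂ), f (finv x) = x)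

/-- `S` is a subgroup of the group `Diff(ℂᵏ,0)` of germs at `0` of holomorphic
diffeomorphisms fixing `0`: it consists of such germs, contains the identity germ,
and is closed under composition and inversion. -/
structure IsGermDiffSubgroup (k : ℕ)
    (S : Set (Filter.Germ (nhds (0 : Fin k → ℂ)) (Fin k → ℂ))) : Prop where
  id_mem : germ0 k id ∈ S
  holo : ∀ g ∈ S, IsHolDiffGerm k g
  comp_mem : ∀ f g : (Fin k → ℂ) → (Fin k → ℂ),
    germ0 k f ∈ S → germ0 k g ∈ S → germ0 k (f ∘ g) ∈ S
  inv_mem : ∀ f finv : (Fin k → ℂ) → (Fin k → ℂ), germ0 k f ∈ S →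
    (∀ᶠ x in nhds (0 : Fin k → ℂ), finv (f x) = x) →
    (∀ᶠ x in nhds (0 : Fin k → ℂ), f (finv x) = x) → germ0 k finv ∈ S



section Aux

open Matrix Polynomial

variable {k m : ℕ}

local notation "V" => (Fin k → ℂ)

/-- An idempotent `k×k` complex matrix with trace `k` is the identity. -/
lemma idem_trace_eq_one (P : Matrix (Fin k) (Fin k) ℂ) (hP : P * P = P)
    (htr : P.trace = (k : ℂ)) : P = 1 := by
  set f : (Fin k → ℂ) →ₗ[ℂ] (Fin k → ℂ) := Matrix.toLin' P with hf
  have hff : f ∘ₗ f = f := by rw [hf, ← Matrix.toLin'_mul, hP]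
  have hproj : LinearMap.IsProj (LinearMap.range f) f := by
    refine ⟨fun x => LinearMap.mem_range_self f x, ?_⟩
    rintro x ⟨y, rfl⟩
    exact congrFun (congrArg DFunLike.coe hff) y
  have htr' : LinearMap.trace ℂ _ f = (Module.finrank ℂ (LinearMap.range f) : ℂ) :=
    hproj.trace
  have htrf : LinearMap.trace ℂ _ f = P.trace := by
    rw [LinearMap.trace_eq_matrix_trace ℂ (Pi.basisFun ℂ (Fin k)) f, hf,
      LinearMap.toMatrix_eq_toMatrix', LinearMap.toMatrix'_toLin']
  have hrank : Module.finrank ℂ (LinearMap.range f) = k := by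
    have : ((Module.finrank ℂ (LinearMap.range f) : ℂ)) = (k : ℂ) := by
      rw [← htr', htrf, htr]
    exact_mod_cast this
  have hrange : LinearMap.range f = ⊤ := by
    apply Submodule.eq_top_of_finrank_eq
    rw [hrank, Module.finrank_pi]
    simp
  have hid : f = LinearMap.id := by
    apply LinearMap.ext
    intro x
    have hx : x ∈ LinearMap.range f := hrange ▸ Submodule.mem_top
    exact hproj.map_id x hx
  have : Matrix.toLin' P = Matrix.toLin' (1 : Matrix (Fin k) (Fin k) ℂ) := by
    rw [← hf, hid, Matrix.toLin'_one]
  exact Matrix.toLin'.injective this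

lemma pow_mulVec_eq {A : Matrix (Fin k) (Fin k) ℂ} {v : Fin k → ℂ} {μ : ℂ}
    (hAv : A.mulVec v = μ • v) : ∀ j : ℕ, (A ^ j).mulVec v = μ ^ j • v := by
  intro j
  induction j with
  | zero => simp [Matrix.one_mulVec]
  | succ n ih =>
      rw [pow_succ', ← Matrix.mulVec_mulVec, ih, Matrix.mulVec_smul, hAv, smul_smul,
        mul_comm (μ ^ n) μ, ← pow_succ']

/-- Roots of the characteristic polynomial of a matrix with `A ^ m = 1` are `m`-th
roots of unity. -/
lemma charpoly_root_pow_eq_one {A : Matrix (Fin k) (Fin k) ℂ} (hA : A ^ m = 1)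
    {μ : ℂ} (hroot : A.charpoly.IsRoot μ) : μ ^ m = 1 := by
  have hdet : ((μ • 1 : Matrix (Fin k) (Fin k) ℂ) - A).det = 0 := by
    have h := hroot
    rw [Polynomial.IsRoot, Matrix.charpoly, eval_det, matPolyEquiv_charmatrix] at h
    rw [← h]
    congr 1
    rw [Polynomial.eval_sub, Polynomial.eval_X, Polynomial.eval_C]
    congr 1
    simp [Matrix.scalar, Matrix.smul_one_eq_diagonal]
  obtain ⟨v, hv, hveq⟩ := (Matrix.exists_mulVec_eq_zero_iff).2 hdet
  have hAv : A.mulVec v = μ • v := by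
    rw [Matrix.sub_mulVec, Matrix.smul_mulVec, Matrix.one_mulVec, sub_eq_zero] at hveq
    exact hveq.symm
  have := pow_mulVec_eq hAv m
  rw [hA, Matrix.one_mulVec] at this
  obtain ⟨i, hi⟩ := Function.ne_iff.mp hv
  have h3 : v i = μ ^ m * v i := by
    conv_lhs => rw [this]
    simp
  have h2 : (μ ^ m - 1) * v i = 0 := by linear_combination -h3
  rcases mul_eq_zero.mp h2 with h | h
  · exact sub_eq_zero.mp h
  · exact absurd h hi

/-- A matrix of finite order all of whose powers have trace `k` is the identity. -/
lemma eq_one_of_trace_pow (hm : 1 ≤ m) {A : Matrix (Fin k) (Fin k) ℂ} (hA : A ^ m = 1)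
    (htr : ∀ i : ℕ, (A ^ i).trace = (k : ℂ))
    (hidem : ∀ P : Matrix (Fin k) (Fin k) ℂ, P * P = P → P.trace = (k : ℂ) → P = 1) :
    A = 1 := by
  have hmC : (m : ℂ) ≠ 0 := Nat.cast_ne_zero.mpr (by omega)
  set Sg : Matrix (Fin k) (Fin k) ℂ := ∑ i ∈ Finset.range m, A ^ i with hSg
  have hshift : A * Sg = Sg := by
    rw [hSg, Finset.mul_sum]
    have h1 : ∑ i ∈ Finset.range m, A * A ^ i = ∑ i ∈ Finset.range m, A ^ (i + 1) := by
      refine Finset.sum_congr rfl fun i _ => ?_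
      rw [← pow_succ']
    rw [h1]
    have h2 : ∑ i ∈ Finset.range m, A ^ (i + 1) + A ^ 0 = ∑ i ∈ Finset.range m, A ^ i + A ^ m := by
      rw [← Finset.sum_range_succ, Finset.sum_range_succ']
    have := h2
    rw [hA, pow_zero] at this
    exact add_right_cancel this
  have hpowshift : ∀ j : ℕ, A ^ j * Sg = Sg := by
    intro j
    induction j with
    | zero => rw [pow_zero, one_mul]
    | succ n ih => rw [pow_succ', mul_assoc, ih, hshift]
  set P : Matrix (Fin k) (Fin k) ℂ := (m : ℂ)⁻¹ • Sg with hP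
  have hPP : P * P = P := by
    rw [hP, Matrix.smul_mul, Matrix.mul_smul]
    rw [hSg, Finset.sum_mul]
    have h3 : ∑ i ∈ Finset.range m, A ^ i * Sg = ∑ _i ∈ Finset.range m, Sg :=
      Finset.sum_congr rfl fun i _ => hpowshift i
    rw [← hSg, h3, Finset.sum_const, Finset.card_range, smul_smul]
    rw [← Nat.cast_smul_eq_nsmul ℂ m Sg, smul_smul]
    have h4 : ((m:ℂ))⁻¹ * (↑m)⁻¹ * ↑m = (↑m)⁻¹ := by field_simp
    rw [h4]
  have hPtr : P.trace = (k : ℂ) := by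
    rw [hP, Matrix.trace_smul, hSg, Matrix.trace_sum]
    have : ∑ i ∈ Finset.range m, (A ^ i).trace = (m : ℂ) * k := by
      rw [Finset.sum_congr rfl fun i _ => htr i, Finset.sum_const, Finset.card_range,
        nsmul_eq_mul]
    rw [this, smul_eq_mul, ← mul_assoc, inv_mul_cancel₀ hmC, one_mul]
  have hP1 : P = 1 := hidem P hPP hPtr
  have hAP : A * P = P := by rw [hP, Matrix.mul_smul, hshift]
  rw [hP1, mul_one] at hAP
  exact hAP

/-- The set of possible traces: sums of `k` many `m`-th roots of unity. -/
def TrSet (k m : ℕ) : Set ℂ :=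
  (fun v : Fin k → ℂ => ∑ i, v i) '' {v | ∀ i, (v i) ^ m = 1}

lemma trSet_finite (hm : 1 ≤ m) : (TrSet k m).Finite := by
  apply Set.Finite.image
  have h1 : {x : ℂ | x ^ m = 1}.Finite := by
    apply Set.Finite.subset (Polynomial.nthRoots m (1 : ℂ)).toFinset.finite_toSet
    intro x hx
    simp only [Finset.coe_sort_coe, Finset.mem_coe, Multiset.mem_toFinset]
    rw [Polynomial.mem_nthRoots (show 0 < m by omega)]
    exact hx
  have : {v : Fin k → ℂ | ∀ i, (v i) ^ m = 1} = Set.pi Set.univ fun _ => {x | x ^ m = 1} := by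
    ext v; simp [Set.mem_pi]
  rw [this]
  exact Set.Finite.pi fun _ => h1

lemma trace_mem_trSet (hm : 1 ≤ m) {A : Matrix (Fin k) (Fin k) ℂ} (hA : A ^ m = 1)
    (hroot : ∀ μ : ℂ, A.charpoly.IsRoot μ → μ ^ m = 1) :
    A.trace ∈ TrSet k m := by
  have hsplit : (A.charpoly).Splits := IsAlgClosed.splits _
  have hdeg : A.charpoly.natDegree = k := by
    rw [Matrix.charpoly_natDegree_eq_dim, Fintype.card_fin]
  have hcard : Multiset.card A.charpoly.roots = k := by
    rw [(Polynomial.splits_iff_card_roots).mp hsplit, hdeg]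
  set l : List ℂ := A.charpoly.roots.toList with hl
  have hlen : l.length = k := by
    rw [hl, Multiset.length_toList, hcard]
  refine ⟨fun i => l.get (Fin.cast hlen.symm i), ?_, ?_⟩
  · intro i
    apply hroot
    have hmem : l.get (Fin.cast hlen.symm i) ∈ A.charpoly.roots := by
      rw [← Multiset.mem_toList]
      have := List.get_mem l (Fin.cast hlen.symm i)
      exact this
    exact Polynomial.isRoot_of_mem_roots hmem
  · have h1 : A.trace = A.charpoly.roots.sum := Matrix.trace_eq_sum_roots_charpoly A
    have h2 : A.charpoly.roots.sum = l.sum := (Multiset.sum_toList _).symm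
    have h3 : l.sum = ∑ j : Fin l.length, l.get j := by
      conv_lhs => rw [← List.ofFn_get l]
      rw [List.sum_ofFn]
    have h4 : (∑ j : Fin l.length, l.get j) = ∑ i : Fin k, l.get (Fin.cast hlen.symm i) :=
      (Fintype.sum_equiv (finCongr hlen.symm) _ _ (fun i => rfl)).symm
    show (∑ i : Fin k, l.get (Fin.cast hlen.symm i)) = A.trace
    rw [← h4, ← h3, ← h2, ← h1]



/-- Burnside: a set of `k×k` complex matrices containing `1`, closed under
multiplication, all of whose elements satisfy `A ^ m = 1`, is finite. -/
lemma burnside_finite (hm : 1 ≤ m) (T : Set (Matrix (Fin k) (Fin k) ℂ))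
    (h1 : (1 : Matrix (Fin k) (Fin k) ℂ) ∈ T)
    (hmul : ∀ A ∈ T, ∀ B ∈ T, A * B ∈ T)
    (hord : ∀ A ∈ T, A ^ m = 1)
    (htrace : ∀ A ∈ T, A.trace ∈ (TrSet k m))
    (heqone : ∀ A : Matrix (Fin k) (Fin k) ℂ, A ^ m = 1 →
      (∀ i : ℕ, (A ^ i).trace = (k : ℂ)) → A = 1)
    (hTrFin : (TrSet k m).Finite) : T.Finite := by
  classical
  have hpowmem : ∀ A ∈ T, ∀ j : ℕ, A ^ j ∈ T := by
    intro A hA j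
    induction j with
    | zero => simpa using h1
    | succ n ih => rw [pow_succ]; exact hmul _ ih _ hA
  obtain ⟨s, hsT, hspan, hli⟩ := exists_linearIndependent ℂ T
  have hsfin : s.Finite := hli.setFinite
  haveI : Finite s := hsfin.to_subtype
  -- the injection into traces against basis elements
  set Φ : Matrix (Fin k) (Fin k) ℂ → (s → ℂ) := fun A b => (A * (b : Matrix (Fin k) (Fin k) ℂ)).trace with hΦ
  have himage : (Φ '' T) ⊆ Set.pi Set.univ (fun _ : s => TrSet k m) := by
    rintro - ⟨A, hA, rfl⟩
    intro b _
    exact htrace _ (hmul A hA b (hsT b.2))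
  have himfin : (Φ '' T).Finite :=
    Set.Finite.subset (Set.Finite.pi fun _ => hTrFin) himage
  refine Set.Finite.of_finite_image himfin ?_
  -- injectivity on T
  intro A hA A' hA' hΦeq
  -- traces agree against all elements of T
  have htr_all : ∀ H ∈ T, (A * H).trace = (A' * H).trace := by
    intro H hH
    set ψ : Matrix (Fin k) (Fin k) ℂ →ₗ[ℂ] ℂ :=
      (Matrix.traceLinearMap (Fin k) ℂ ℂ) ∘ₗ (LinearMap.mulLeft ℂ (A - A')) with hψ
    have hψs : ∀ b ∈ s, ψ b = 0 := by
      intro b hb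
      have := congrFun hΦeq ⟨b, hb⟩
      simp only [hΦ] at this
      simp [hψ, Matrix.sub_mul, sub_eq_zero, this]
    have hker : Submodule.span ℂ s ≤ LinearMap.ker ψ := by
      rw [Submodule.span_le]
      intro b hb
      exact LinearMap.mem_ker.mpr (hψs b hb)
    have hHmem : H ∈ Submodule.span ℂ s := by
      rw [hspan]
      exact Submodule.subset_span hH
    have : ψ H = 0 := hker hHmem
    simpa [hψ, Matrix.sub_mul, sub_eq_zero] using this
  -- set u := A' * A^(m-1), show u = 1
  have hAinv : A * A ^ (m - 1) = 1 := by
    rw [← pow_succ']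
    have : m - 1 + 1 = m := by omega
    rw [this]; exact hord A hA
  have hAinv' : A ^ (m - 1) * A = 1 := by
    rw [← pow_succ]
    have : m - 1 + 1 = m := by omega
    rw [this]; exact hord A hA
  set u := A' * A ^ (m - 1) with hu
  have huT : u ∈ T := hmul _ hA' _ (hpowmem A hA _)
  have hutr : ∀ i : ℕ, (u ^ i).trace = (k : ℂ) := by
    intro i
    induction i with
    | zero => simp [Matrix.trace_one]
    | succ n ih =>
        have hH : A ^ (m - 1) * u ^ n ∈ T := hmul _ (hpowmem A hA _) _ (hpowmem u huT n)
        have h5 := htr_all _ hH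
        calc (u ^ (n + 1)).trace = (A' * (A ^ (m - 1) * u ^ n)).trace := by
              rw [pow_succ', hu, mul_assoc]
          _ = (A * (A ^ (m - 1) * u ^ n)).trace := h5.symm
          _ = ((A * A ^ (m - 1)) * u ^ n).trace := by rw [mul_assoc]
          _ = (u ^ n).trace := by rw [hAinv, one_mul]
          _ = (k : ℂ) := ih
  have hu1 : u = 1 := heqone u (hord u huT) hutr
  have : A' = A := by
    calc A' = A' * (A ^ (m - 1) * A) := by rw [hAinv', mul_one]
      _ = u * A := by rw [hu, mul_assoc]
      _ = A := by rw [hu1, one_mul]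
  exact this.symm



lemma analyticAt_iterate {f : V → V} (hf : AnalyticAt ℂ f 0) (h0 : f 0 = 0) :
    ∀ n : ℕ, AnalyticAt ℂ (f^[n]) 0 ∧ f^[n] 0 = 0 := by
  intro n
  induction n with
  | zero => exact ⟨analyticAt_id, rfl⟩
  | succ n ih =>
      rw [Function.iterate_succ']
      constructor
      · exact (by rw [ih.2]; exact hf : AnalyticAt ℂ f (f^[n] 0)).comp ih.1
      · simp [Function.comp_apply, ih.2, h0]

lemma fderiv_iterate {f : V → V} (hf : AnalyticAt ℂ f 0) (h0 : f 0 = 0) :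
    ∀ n : ℕ, fderiv ℂ (f^[n]) 0 = (fderiv ℂ f 0) ^ n := by
  intro n
  induction n with
  | zero => rw [Function.iterate_zero, pow_zero, fderiv_id, ContinuousLinearMap.one_def]
  | succ n ih =>
      rw [Function.iterate_succ']
      have h1 : DifferentiableAt ℂ f (f^[n] 0) :=
        (by rw [(analyticAt_iterate hf h0 n).2]; exact hf :
          AnalyticAt ℂ f (f^[n] 0)).differentiableAt
      have h2 : DifferentiableAt ℂ (f^[n]) 0 := (analyticAt_iterate hf h0 n).1.differentiableAt
      rw [fderiv_comp 0 h1 h2, (analyticAt_iterate hf h0 n).2, ih, pow_succ']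
      rfl

/-- Key linearization lemma: a finite-order analytic germ tangent to the identity
is the identity. -/
lemma eventuallyEq_id_of_tangent_id (hm : 1 ≤ m) {f : V → V}
    (hf : AnalyticAt ℂ f 0) (h0 : f 0 = 0)
    (hD : fderiv ℂ f 0 = ContinuousLinearMap.id ℂ V)
    (hit : f^[m] =ᶠ[nhds (0 : V)] id) : f =ᶠ[nhds (0 : V)] id := by
  have hmC : (m : ℂ) ≠ 0 := Nat.cast_ne_zero.mpr (by omega)
  set L : V → V := fun x => (m : ℂ)⁻¹ • ∑ j ∈ Finset.range m, f^[j] x with hL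
  have hiter := analyticAt_iterate hf h0
  have hLa : AnalyticAt ℂ L 0 := by
    apply AnalyticAt.fun_smul analyticAt_const
    exact Finset.analyticAt_fun_sum _ (fun j _ => (hiter j).1)
  have hdiffsum : ∀ j ∈ Finset.range m, DifferentiableAt ℂ (fun x => f^[j] x) 0 :=
    fun j _ => (hiter j).1.differentiableAt
  have hLD : fderiv ℂ L 0 = ContinuousLinearMap.id ℂ V := by
    rw [hL]
    rw [fderiv_fun_const_smul (by exact DifferentiableAt.fun_sum hdiffsum) ((m : ℂ)⁻¹)]
    rw [fderiv_fun_sum hdiffsum]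
    have : ∀ j ∈ Finset.range m, fderiv ℂ (fun x => f^[j] x) 0 = ContinuousLinearMap.id ℂ V := by
      intro j _
      have := fderiv_iterate hf h0 j
      rw [this, hD, ← ContinuousLinearMap.one_def, one_pow]
    rw [Finset.sum_congr rfl this, Finset.sum_const, Finset.card_range]
    rw [← Nat.cast_smul_eq_nsmul ℂ m, smul_smul, inv_mul_cancel₀ hmC, one_smul]
  -- L has invertible strict derivative at 0, hence is locally injective
  have hstrict : HasStrictFDerivAt L
      (↑(ContinuousLinearEquiv.refl ℂ V) : V →L[ℂ] V) 0 := by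
    have h1 : HasStrictFDerivAt L (fderiv ℂ L 0) 0 :=
      (hLa.contDiffAt (n := 2)).hasStrictFDerivAt (by norm_num)
    rw [hLD] at h1
    exact h1
  set e := HasStrictFDerivAt.toOpenPartialHomeomorph L hstrict with he
  have hsource : (0 : V) ∈ e.source := HasStrictFDerivAt.mem_toOpenPartialHomeomorph_source hstrict
  have hinj : Set.InjOn L e.source := by
    intro a ha b hb hab
    have := e.injOn
    rw [he] at *
    exact e.injOn ha hb hab
  -- eventually, f x = x
  have hfx : ∀ᶠ x in nhds (0 : V), f x ∈ e.source := by
    have hcont : ContinuousAt f 0 := hf.continuousAt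
    have : Filter.Tendsto f (nhds 0) (nhds 0) := by
      simpa [h0] using hcont.tendsto
    exact this (e.open_source.mem_nhds hsource)
  have hx : ∀ᶠ x in nhds (0 : V), x ∈ e.source := e.open_source.mem_nhds hsource
  filter_upwards [hit, hfx, hx] with x hitx hfxx hxx
  -- L (f x) = L x
  have hLfx : L (f x) = L x := by
    rw [hL]
    simp only []
    congr 1
    have h6 : ∀ j, f^[j] (f x) = f^[j + 1] x := fun j => (Function.iterate_succ_apply f j x).symm
    rw [Finset.sum_congr rfl fun j _ => h6 j]
    have h7 : ∑ j ∈ Finset.range m, f^[j + 1] x + f^[0] x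
        = ∑ j ∈ Finset.range m, f^[j] x + f^[m] x := by
      rw [← Finset.sum_range_succ, Finset.sum_range_succ']
    have h8 : f^[m] x = x := hitx
    rw [h8] at h7
    simpa using h7
  have : e.toFun (f x) = e.toFun x := by simpa [he] using hLfx
  exact hinj hfxx hxx (by simpa [he] using hLfx)

end Aux

lemma germ0_eq {k : ℕ} {f g : (Fin k → ℂ) → (Fin k → ℂ)} :
    germ0 k f = germ0 k g ↔ f =ᶠ[nhds (0 : Fin k → ℂ)] g :=
  Filter.Germ.coe_eq

/-- The derivative-at-`0` map from germs to matrices. -/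
noncomputable def Dmat (k : ℕ) :
    Filter.Germ (nhds (0 : Fin k → ℂ)) (Fin k → ℂ) → Matrix (Fin k) (Fin k) ℂ :=
  fun g => Filter.Germ.liftOn g
    (fun f => LinearMap.toMatrixAlgEquiv' ((fderiv ℂ f 0 : (Fin k → ℂ) →L[ℂ] (Fin k → ℂ)) :
      (Fin k → ℂ) →ₗ[ℂ] (Fin k → ℂ)))
    (fun f g h => by simp only []; rw [h.fderiv_eq])

lemma Dmat_germ0 {k : ℕ} (f : (Fin k → ℂ) → (Fin k → ℂ)) :
    Dmat k (germ0 k f) = LinearMap.toMatrixAlgEquiv'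
      ((fderiv ℂ f 0 : (Fin k → ℂ) →L[ℂ] (Fin k → ℂ)) :
        (Fin k → ℂ) →ₗ[ℂ] (Fin k → ℂ)) := rfl

lemma clm_coe_pow {k : ℕ} (A : (Fin k → ℂ) →L[ℂ] (Fin k → ℂ)) (n : ℕ) :
    ((A ^ n : (Fin k → ℂ) →L[ℂ] (Fin k → ℂ)) : (Fin k → ℂ) →ₗ[ℂ] (Fin k → ℂ))
      = (A : (Fin k → ℂ) →ₗ[ℂ] (Fin k → ℂ)) ^ n := by
  induction n with
  | zero => simp [ContinuousLinearMap.one_def]; rfl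
  | succ n ih => rw [pow_succ, pow_succ, ← ih]; rfl

lemma Dmat_id {k : ℕ} : Dmat k (germ0 k id) = 1 := by
  rw [Dmat_germ0, fderiv_id]
  simp [ContinuousLinearMap.coe_id]

/-- A (not necessarily finitely generated) subgroup of germs at `0` of holomorphic
diffeomorphisms of `ℂᵏ` of finite exponent is finite. -/
theorem finite_of_germDiffSubgroup_finiteExponent (k m : ℕ)
    (S : Set (Filter.Germ (nhds (0 : Fin k → ℂ)) (Fin k → ℂ)))
    (hS : IsGermDiffSubgroup k S) (hm : 1 ≤ m)
    (hexp : ∀ f : (Fin k → ℂ) → (Fin k → ℂ), germ0 k f ∈ S →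
      germ0 k (f^[m]) = germ0 k id) :
    S.Finite := by
  classical
  set D := Dmat k with hDdef
  -- the order of every matrix in the image divides `m`
  have hordg : ∀ g ∈ S, (D g) ^ m = 1 := by
    intro g hg
    obtain ⟨f, finv, hrep, hfa, hf0, hia, hi0, hl, hr⟩ := hS.holo g hg
    rw [hrep] at hg ⊢
    have hit : f^[m] =ᶠ[nhds (0 : Fin k → ℂ)] id := germ0_eq.mp (hexp f hg)
    have h1 : fderiv ℂ (f^[m]) 0 = fderiv ℂ (id : (Fin k → ℂ) → (Fin k → ℂ)) 0 :=
      hit.fderiv_eq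
    rw [fderiv_id, fderiv_iterate hfa hf0 m] at h1
    rw [hDdef, Dmat_germ0, ← map_pow, ← clm_coe_pow, h1]
    simp [ContinuousLinearMap.coe_id]
  -- multiplicativity on composites
  have hDcomp : ∀ f g : (Fin k → ℂ) → (Fin k → ℂ), AnalyticAt ℂ f 0 → AnalyticAt ℂ g 0 →
      g 0 = 0 → D (germ0 k (f ∘ g)) = D (germ0 k f) * D (germ0 k g) := by
    intro f g hfa hga hg0
    have hdf : DifferentiableAt ℂ f (g 0) := by rw [hg0]; exact hfa.differentiableAt
    have hdg : DifferentiableAt ℂ g 0 := hga.differentiableAt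
    rw [hDdef, Dmat_germ0, Dmat_germ0, Dmat_germ0, fderiv_comp 0 hdf hdg, hg0,
      ContinuousLinearMap.toLinearMap_comp, ← Module.End.mul_eq_comp, map_mul]
  -- the image is closed under multiplication
  have hmulT : ∀ A ∈ D '' S, ∀ B ∈ D '' S, A * B ∈ D '' S := by
    rintro - ⟨g₁, hg₁, rfl⟩ - ⟨g₂, hg₂, rfl⟩
    obtain ⟨f, finv, hrep, hfa, hf0, hia, hi0, hl, hr⟩ := hS.holo g₁ hg₁
    obtain ⟨g, ginv, hrep', hga, hg0, hia', hi0', hl', hr'⟩ := hS.holo g₂ hg₂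
    rw [hrep] at hg₁ ⊢
    rw [hrep'] at hg₂ ⊢
    rw [← hDcomp f g hfa hga hg0]
    exact ⟨germ0 k (f ∘ g), hS.comp_mem f g hg₁ hg₂, rfl⟩
  -- one is in the image
  have h1T : (1 : Matrix (Fin k) (Fin k) ℂ) ∈ D '' S :=
    ⟨germ0 k id, hS.id_mem, Dmat_id⟩
  -- injectivity of `D` on `S`
  have hinj : Set.InjOn D S := by
    intro g₁ hg₁ g₂ hg₂ hDeq
    obtain ⟨f, finv, hrep, hfa, hf0, hia, hi0, hl, hr⟩ := hS.holo g₁ hg₁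
    obtain ⟨g, ginv, hrep', hga, hg0, hia', hi0', hl', hr'⟩ := hS.holo g₂ hg₂
    rw [hrep] at hg₁ ⊢
    rw [hrep'] at hg₂ ⊢
    -- derivatives
    set Df := fderiv ℂ f 0 with hDf
    set Dg := fderiv ℂ g 0 with hDg
    set Dgi := fderiv ℂ ginv 0 with hDgi
    have hDfDg : Df = Dg := by
      rw [hrep, hrep', hDdef, Dmat_germ0, Dmat_germ0] at hDeq
      exact ContinuousLinearMap.coe_injective
        (LinearMap.toMatrixAlgEquiv'.injective hDeq)
    have hgev : (fun x => ginv (g x)) =ᶠ[nhds (0 : Fin k → ℂ)] id := hl'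
    have hgev2 : (fun x => g (ginv x)) =ᶠ[nhds (0 : Fin k → ℂ)] id := hr'
    have hdgi : DifferentiableAt ℂ ginv (g 0) := by rw [hg0]; exact hia'.differentiableAt
    have hdg : DifferentiableAt ℂ g 0 := hga.differentiableAt
    have hDgil : Dgi.comp Dg = ContinuousLinearMap.id ℂ (Fin k → ℂ) := by
      have h2 : fderiv ℂ (ginv ∘ g) 0 = Dgi.comp Dg := by
        rw [fderiv_comp 0 hdgi hdg, hg0]
      have h3 : fderiv ℂ (ginv ∘ g) 0
          = fderiv ℂ (id : (Fin k → ℂ) → (Fin k → ℂ)) 0 :=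
        Filter.EventuallyEq.fderiv_eq hgev
      rw [fderiv_id] at h3
      rw [← h2, h3]
    -- the composite h = f ∘ ginv is tangent to the identity
    have hcompa : AnalyticAt ℂ (f ∘ ginv) 0 :=
      (by rw [hi0']; exact hfa : AnalyticAt ℂ f (ginv 0)).comp hia'
    have hcomp0 : (f ∘ ginv) 0 = 0 := by simp [Function.comp_apply, hi0', hf0]
    have hdfi : DifferentiableAt ℂ f (ginv 0) := by rw [hi0']; exact hfa.differentiableAt
    have hDcompid : fderiv ℂ (f ∘ ginv) 0 = ContinuousLinearMap.id ℂ (Fin k → ℂ) := by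
      rw [fderiv_comp 0 hdfi hia'.differentiableAt, hi0', ← hDf, ← hDgi, hDfDg]
      -- Dg.comp Dgi = id
      have h4 : fderiv ℂ (g ∘ ginv) 0 = Dg.comp Dgi := by
        rw [fderiv_comp 0 (by rw [hi0']; exact hga.differentiableAt) hia'.differentiableAt,
          hi0']
      have h5 : fderiv ℂ (g ∘ ginv) 0
          = fderiv ℂ (id : (Fin k → ℂ) → (Fin k → ℂ)) 0 :=
        Filter.EventuallyEq.fderiv_eq hgev2
      rw [fderiv_id] at h5
      rw [← h4, h5]
    -- h ∈ S hence h^[m] = id as a germ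
    have hginvS : germ0 k ginv ∈ S := hS.inv_mem g ginv hg₂ hl' hr'
    have hhS : germ0 k (f ∘ ginv) ∈ S := hS.comp_mem f ginv hg₁ hginvS
    have hit : (f ∘ ginv)^[m] =ᶠ[nhds (0 : Fin k → ℂ)] id :=
      germ0_eq.mp (hexp _ hhS)
    have hkey : (f ∘ ginv) =ᶠ[nhds (0 : Fin k → ℂ)] id :=
      eventuallyEq_id_of_tangent_id hm hcompa hcomp0 hDcompid hit
    -- conclude f = g near 0
    have hgt : Filter.Tendsto g (nhds (0 : Fin k → ℂ)) (nhds (0 : Fin k → ℂ)) := by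
      have := hga.continuousAt
      rw [ContinuousAt, hg0] at this
      exact this
    have hkey' : ∀ᶠ x in nhds (0 : Fin k → ℂ), f (ginv (g x)) = g x := by
      filter_upwards [hgt.eventually hkey] with x hx
      simpa [Function.comp_apply] using hx
    have hfg : f =ᶠ[nhds (0 : Fin k → ℂ)] g := by
      filter_upwards [hkey', hl'] with x h1 h2
      rw [h2] at h1
      exact h1
    exact germ0_eq.mpr hfg
  -- finiteness of the image via Burnside
  have hordT : ∀ A ∈ D '' S, A ^ m = 1 := by
    rintro - ⟨g, hg, rfl⟩
    exact hordg g hg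
  have htraceT : ∀ A ∈ D '' S, A.trace ∈ TrSet k m := by
    intro A hA
    exact trace_mem_trSet hm (hordT A hA)
      (fun μ hμ => charpoly_root_pow_eq_one (hordT A hA) hμ)
  have heqone : ∀ A : Matrix (Fin k) (Fin k) ℂ, A ^ m = 1 →
      (∀ i : ℕ, (A ^ i).trace = (k : ℂ)) → A = 1 :=
    fun A hA htr => eq_one_of_trace_pow hm hA htr
      (fun P hPP hPtr => idem_trace_eq_one P hPP hPtr)
  have hTfin : (D '' S).Finite :=
    burnside_finite hm (D '' S) h1T hmulT hordT htraceT heqone (trSet_finite hm)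
  exact Set.Finite.of_finite_image hTfin hinj
end

section
/- Let g be a holomorphic diffeomorphism germ at 0 ∈ ℂᵏ with a representative defined on a connected open neighborhood W of 0 such that every point x ∈ W is periodic for g (i.e., for each x there is k(x) ∈ ℕ with g^{k(x)}(x) = x, all iterates being defined). Then g has finite order: g^k = Id on W for some k ∈ ℕ. -/
open Filter Function Set

/-- If `g` is a holomorphic injective map of a connected open neighborhood `W` of
`0 ∈ ℂᵏ` into itself, fixing `0`, such that every point of `W` is periodic for `g`,
then `g` has finite order: `g^[k] = id` on `W` for some `k ≥ 1`. -/
theorem exists_iterate_eq_id_of_forall_periodic (k : ℕ) (W : Set (Fin k → ℂ))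
    (hWo : IsOpen W) (hWc : IsConnected W) (h0W : (0 : Fin k → ℂ) ∈ W)
    (g : (Fin k → ℂ) → (Fin k → ℂ))
    (hg : AnalyticOnNhd ℂ g W) (hinj : Set.InjOn g W) (hmaps : Set.MapsTo g W W)
    (hg0 : g 0 = 0)
    (hper : ∀ x ∈ W, ∃ n, 1 ≤ n ∧ g^[n] x = x) :
    ∃ m, 1 ≤ m ∧ ∀ x ∈ W, g^[m] x = x := by
  -- iterates are analytic on W and map W to W
  have hiter : ∀ n : ℕ, AnalyticOnNhd ℂ (g^[n]) W ∧ Set.MapsTo (g^[n]) W W := by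
    intro n
    induction n with
    | zero => simpa using ⟨analyticOnNhd_id, mapsTo_id W⟩
    | succ n ih =>
      rw [Function.iterate_succ']
      exact ⟨hg.comp ih.1 ih.2, hmaps.comp ih.2⟩
  -- choose a closed ball around 0 inside W
  obtain ⟨r, hr, hball⟩ : ∃ r > 0, Metric.closedBall (0 : Fin k → ℂ) r ⊆ W :=
    Metric.nhds_basis_closedBall.mem_iff.mp (hWo.mem_nhds h0W)
  set B := Metric.closedBall (0 : Fin k → ℂ) r with hB
  have hBclosed : IsClosed B := Metric.isClosed_closedBall
  haveI : CompleteSpace B := hBclosed.completeSpace_coe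
  haveI : Nonempty B := ⟨⟨0, Metric.mem_closedBall_self hr.le⟩⟩
  -- Baire category: some fixed-point set of g^[n+1] has nonempty interior in B
  have hcont : ∀ n : ℕ, Continuous fun x : B => g^[n] x.1 := fun n =>
    ((hiter n).1.continuousOn.mono hball).restrict.congr fun x => rfl
  have hclosed : ∀ n : ℕ, IsClosed {x : B | g^[n + 1] x.1 = x.1} := fun n =>
    isClosed_eq (hcont (n + 1)) continuous_subtype_val
  have hcover : ⋃ n : ℕ, {x : B | g^[n + 1] x.1 = x.1} = univ := by
    ext x
    simp only [mem_iUnion, mem_setOf_eq, mem_univ, iff_true]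
    obtain ⟨n, hn1, hn⟩ := hper x.1 (hball x.2)
    obtain ⟨m, rfl⟩ := Nat.exists_eq_add_of_le hn1
    exact ⟨m, by simpa [Nat.add_comm] using hn⟩
  obtain ⟨n, x, hx⟩ := nonempty_interior_of_iUnion_of_closed hclosed hcover
  -- extract an open set in ℂᵏ where g^[n+1] = id
  obtain ⟨V, hVsub, hVopen, hxV⟩ := mem_interior.mp hx
  obtain ⟨U, hUopen, hUV⟩ := isOpen_induced_iff.mp hVopen
  -- x.1 ∈ U and U ∩ B ⊆ fixed points
  have hxU : x.1 ∈ U := by rw [← hUV] at hxV; exact hxV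
  -- find a point of U ∩ ball 0 r (open)
  have hxcl : x.1 ∈ closure (Metric.ball (0 : Fin k → ℂ) r) := by
    rw [closure_ball _ hr.ne']; exact x.2
  obtain ⟨z, hzU, hzball⟩ := mem_closure_iff.mp hxcl U hUopen hxU
  have hfix : ∀ y ∈ U ∩ Metric.ball (0 : Fin k → ℂ) r, g^[n + 1] y = y := by
    intro y hy
    have hyB : y ∈ B := Metric.ball_subset_closedBall hy.2
    have : (⟨y, hyB⟩ : B) ∈ V := by rw [← hUV]; exact hy.1
    exact hVsub this
  -- identity theorem
  have hzW : z ∈ W := hball (Metric.ball_subset_closedBall hzball)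
  have hev : g^[n + 1] =ᶠ[nhds z] id := by
    filter_upwards [(hUopen.inter Metric.isOpen_ball).mem_nhds ⟨hzU, hzball⟩] with y hy
    exact hfix y hy
  refine ⟨n + 1, Nat.le_add_left 1 n, fun x hxW => ?_⟩
  exact (hiter (n + 1)).1.eqOn_of_preconnected_of_eventuallyEq analyticOnNhd_id
    hWc.isPreconnected hzW hev hxW
end
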